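/- Let G be an n-vertex graph with minimum degree at least δ whose maximum independent set I has size n−k with δ+1 ≤ k, and let J' ⊆ J = V\I be a set of δ vertices each with at least (n−k)/(k−δ+1) neighbors in I. Then for any x > 0, the contribution to P(G,x) from independent sets meeting J' is at most (1+x)^δ · (1+x)^{n−δ−(n−k)/(k−δ+1)}. -/

import Mathlib

/-- A finset of vertices is independent: no edge inside. -/
def SimpleGraph.IsIndepFinset {V : Type*} (G : SimpleGraph V) (s : Finset V) : Prop :=
  ∀ v ∈ s, ∀ w ∈ s, ¬ G.Adj v w

/-- `indepCount G t` = number of independent sets of size `t` in `G`. -/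
noncomputable def indepCount {V : Type*} [Fintype V] (G : SimpleGraph V) (t : ℕ) : ℕ :=
  Nat.card {s : Finset V // s.card = t ∧ G.IsIndepFinset s}

/-- `indepTotal G` = total number of independent sets in `G` (including ∅). -/
noncomputable def indepTotal {V : Type*} [Fintype V] (G : SimpleGraph V) : ℕ :=
  Nat.card {s : Finset V // G.IsIndepFinset s}

open Classical in
/-- The independence polynomial `P(G,x) = Σ_t i_t(G) xᵗ`. -/
noncomputable def indPoly {V : Type*} [Fintype V] (G : SimpleGraph V) (x : ℝ) : ℝ :=
  ∑ s ∈ Finset.univ.filter (fun s : Finset V => G.IsIndepFinset s), x ^ s.card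

private lemma sum_pow_card_powerset {V : Type*} [DecidableEq V] (F : Finset V) (x : ℝ) :
    ∑ u ∈ F.powerset, x ^ u.card = (1 + x) ^ F.card := by
  have h := Finset.sum_pow_mul_eq_add_pow x 1 F
  simpa [add_comm] using h

open Classical in
theorem contribution_meeting_J' {V : Type*} [Fintype V] [DecidableEq V]
    (G : SimpleGraph V) [DecidableRel G.Adj] (n k δ : ℕ) (x : ℝ) (hx : 0 < x)
    (hcard : Fintype.card V = n) (hδ : 1 ≤ δ) (hk : δ + 1 ≤ k) (hkn : k ≤ n)
    (hdeg : ∀ v : V, δ ≤ G.degree v)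
    (I : Finset V) (hI : G.IsIndepFinset I) (hIcard : I.card = n - k)
    (hmax : ∀ s : Finset V, G.IsIndepFinset s → s.card ≤ n - k)
    (J' : Finset V) (hJ' : J' ⊆ Finset.univ \ I) (hJcard : J'.card = δ)
    (hnb : ∀ v ∈ J',
      ((n : ℝ) - k) / ((k : ℝ) - δ + 1) ≤ ((G.neighborFinset v ∩ I).card : ℝ)) :
    ∑ s ∈ Finset.univ.filter
        (fun s : Finset V => G.IsIndepFinset s ∧ (s ∩ J').Nonempty), x ^ s.card
      ≤ (1 + x) ^ δ * (1 + x) ^ ((n : ℝ) - δ - ((n : ℝ) - k) / ((k : ℝ) - δ + 1)) := by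
  classical
  set m : ℝ := ((n : ℝ) - k) / ((k : ℝ) - δ + 1) with hm
  set N : ℝ := (1 + x) ^ ((n : ℝ) - δ - m) with hN
  have hx1 : (1 : ℝ) < 1 + x := by linarith
  have hx0 : (0 : ℝ) ≤ x := hx.le
  have hNpos : 0 < N := Real.rpow_pos_of_pos (by linarith) _
  have hδn : δ ≤ n := le_trans (by omega) hkn
  set A : Finset (Finset V) := Finset.univ.filter
      (fun s : Finset V => G.IsIndepFinset s ∧ (s ∩ J').Nonempty) with hA
  -- fiber decomposition over T = s ∩ J'
  have hmaps : ∀ s ∈ A, s ∩ J' ∈ J'.powerset := by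
    intro s _
    exact Finset.mem_powerset.2 (Finset.inter_subset_right)
  have hfib := Finset.sum_fiberwise_of_maps_to hmaps (fun s => x ^ s.card)
  rw [← hfib]
  -- define F for nonempty T
  -- bound each fiber
  have key : ∀ T ∈ J'.powerset,
      ∑ s ∈ A.filter (fun s => s ∩ J' = T), x ^ s.card ≤ x ^ T.card * N := by
    intro T hT
    rcases T.eq_empty_or_nonempty with rfl | hTne
    · have : A.filter (fun s => s ∩ J' = (∅ : Finset V)) = ∅ := by
        apply Finset.filter_false_of_mem
        intro s hs h
        rw [hA, Finset.mem_filter] at hs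
        exact hs.2.2.ne_empty h
      rw [this]
      simp only [Finset.sum_empty]
      positivity
    · obtain ⟨v, hvT⟩ := hTne
      have hvJ : v ∈ J' := (Finset.mem_powerset.1 hT) hvT
      set D : Finset V := G.neighborFinset v ∩ I with hD
      set F : Finset V := (Finset.univ \ J') \ D with hF
      -- D ⊆ univ \ J'
      have hDsub : D ⊆ Finset.univ \ J' := by
        intro w hw
        rw [hD, Finset.mem_inter] at hw
        rw [Finset.mem_sdiff]
        refine ⟨Finset.mem_univ _, fun hwJ => ?_⟩
        have := hJ' hwJ
        rw [Finset.mem_sdiff] at this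
        exact this.2 hw.2
      have hcardUJ : (Finset.univ \ J').card = n - δ := by
        rw [Finset.card_sdiff_of_subset (Finset.subset_univ _), Finset.card_univ, hcard, hJcard]
      have hDle : D.card ≤ n - δ := hcardUJ ▸ Finset.card_le_card hDsub
      have hFcard : (F.card : ℝ) = (n : ℝ) - δ - D.card := by
        rw [hF, Finset.card_sdiff_of_subset hDsub, hcardUJ]
        push_cast [Nat.cast_sub hDle, Nat.cast_sub hδn]
        ring
      have hmD : m ≤ (D.card : ℝ) := hnb v hvJ
      -- (1+x)^F.card ≤ N
      have hNF : (1 + x) ^ F.card ≤ N := by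
        rw [hN, ← Real.rpow_natCast (1 + x) F.card]
        apply Real.rpow_le_rpow_of_exponent_le hx1.le
        rw [hFcard]; linarith
      -- bound the fiber sum
      have hsplit : ∀ s ∈ A.filter (fun s => s ∩ J' = T),
          x ^ s.card = x ^ T.card * x ^ (s \ J').card := by
        intro s hs
        rw [Finset.mem_filter] at hs
        rw [← pow_add, ← hs.2, Finset.card_inter_add_card_sdiff]
      rw [Finset.sum_congr rfl hsplit, ← Finset.mul_sum]
      apply mul_le_mul_of_nonneg_left _ (by positivity)
      -- Σ_{s ∈ fiber} x^{|s\J'|} ≤ Σ_{u ⊆ F} x^{|u|} = (1+x)^{|F|} ≤ N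
      calc ∑ s ∈ A.filter (fun s => s ∩ J' = T), x ^ (s \ J').card
          = ∑ u ∈ (A.filter (fun s => s ∩ J' = T)).image (· \ J'), x ^ u.card := by
            rw [Finset.sum_image]
            intro s hs t ht hst
            rw [Finset.mem_coe, Finset.mem_filter] at hs ht
            have huni : ∀ r : Finset V, r ∩ J' ∪ r \ J' = r := by
              intro r; ext a; simp only [Finset.mem_union, Finset.mem_inter,
                Finset.mem_sdiff]; tauto
            rw [← huni s, ← huni t, hs.2, ht.2, show s \ J' = t \ J' from hst]
        _ ≤ ∑ u ∈ F.powerset, x ^ u.card := by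
            apply Finset.sum_le_sum_of_subset_of_nonneg
            · intro u hu
              rw [Finset.mem_image] at hu
              obtain ⟨s, hs, rfl⟩ := hu
              rw [Finset.mem_filter, hA, Finset.mem_filter] at hs
              obtain ⟨⟨-, hsind, -⟩, hsT⟩ := hs
              have hvs : v ∈ s := by
                have := hsT ▸ hvT
                exact (Finset.mem_inter.1 this).1
              rw [Finset.mem_powerset, hF]
              intro w hw
              rw [Finset.mem_sdiff] at hw
              rw [Finset.mem_sdiff, Finset.mem_sdiff]
              refine ⟨⟨Finset.mem_univ _, hw.2⟩, fun hwD => ?_⟩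
              rw [hD, Finset.mem_inter, SimpleGraph.mem_neighborFinset] at hwD
              exact hsind v hvs w hw.1 hwD.1
            · intro u _ _
              positivity
        _ = (1 + x) ^ F.card := sum_pow_card_powerset F x
        _ ≤ N := hNF
  calc ∑ T ∈ J'.powerset, ∑ s ∈ A.filter (fun s => s ∩ J' = T), x ^ s.card
      ≤ ∑ T ∈ J'.powerset, x ^ T.card * N := Finset.sum_le_sum key
    _ = (∑ T ∈ J'.powerset, x ^ T.card) * N := by rw [Finset.sum_mul]
    _ = (1 + x) ^ δ * N := by rw [sum_pow_card_powerset, hJcard]
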